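/- Let M be a finitely generated module over a Noetherian ring such that M_q has length 1 over R_q for every q ∈ Ass(M) (M is binary), and suppose M has a unique associated prime p with p moreover minimal. Then pM = 0 and M is isomorphic as an R/p-module to a nonzero ideal of the domain R/p. -/

import Mathlib

set_option maxHeartbeats 2000000 in
theorem stmt_13 {R M : Type*} [CommRing R] [IsNoetherianRing R]
    [AddCommGroup M] [Module R M] [Module.Finite R M]
    (p : Ideal R) (hp : p.IsPrime)
    (hass : associatedPrimes R M = {p})
    (hmin : p ∈ (Module.annihilator R M).minimalPrimes)
    (hlen : IsSimpleModule (Localization.AtPrime p) (LocalizedModule p.primeCompl M)) :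
    Module.annihilator R M = p ∧
      ∃ φ : M →ₗ[R] R ⧸ p, Function.Injective φ ∧ LinearMap.range φ ≠ ⊥ := by
  haveI := hp
  haveI := hlen
  set A := Localization.AtPrime p with hA
  set N := LocalizedModule p.primeCompl M with hN
  -- every nonzero element of M has annihilator contained in p
  have hann_le : ∀ m : M, m ≠ 0 → ∀ r : R, r • m = 0 → r ∈ p := by
    intro m hm r hr
    obtain ⟨P, hP, hle⟩ := exists_le_isAssociatedPrime_of_isNoetherianRing R m hm
    have hPp : P = p := by
      have : P ∈ associatedPrimes R M := hP
      rw [hass] at this; exact this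
    exact hPp ▸ hle (Submodule.mem_colon_singleton.mpr ((Submodule.mem_bot R).mpr hr))
  -- localization map is injective
  have hinj : ∀ m : M, (LocalizedModule.mk m 1 : N) = 0 → m = 0 := by
    intro m hm
    rw [← LocalizedModule.zero_mk (1 : p.primeCompl)] at hm
    obtain ⟨u, hu⟩ := LocalizedModule.mk_eq.mp hm
    simp only [smul_zero, one_smul] at hu
    by_contra hmne
    exact u.2 (hann_le m hmne u hu)
  -- maximal ideal of A annihilates the simple module N
  have hmaxann : ∀ a : A, a ∈ IsLocalRing.maximalIdeal A → ∀ n : N, a • n = 0 := by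
    intro a ha n
    by_contra hne
    have hspan : Submodule.span A {a • n} = ⊤ := by
      rcases eq_bot_or_eq_top (Submodule.span A {a • n}) with h | h
      · exact absurd (Submodule.span_singleton_eq_bot.mp h) hne
      · exact h
    have hmem : n ∈ Submodule.span A {a • n} := hspan ▸ Submodule.mem_top
    obtain ⟨c, hc⟩ := Submodule.mem_span_singleton.mp hmem
    have hu : IsUnit (1 - c * a) :=
      IsLocalRing.isUnit_one_sub_self_of_mem_nonunits _
        ((IsLocalRing.mem_maximalIdeal _).mp (Ideal.mul_mem_left _ c ha))
    have h0 : (1 - c * a) • n = 0 := by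
      rw [sub_smul, one_smul, mul_smul, hc, sub_self]
    obtain ⟨u, hu⟩ := hu
    have : n = 0 := by
      have h1 : (u⁻¹ : Aˣ) • (1 - c * a) • n = 0 := by rw [h0, smul_zero]
      rwa [← hu, Units.smul_def, smul_smul, Units.inv_mul, one_smul] at h1
    rw [this, smul_zero] at hne
    exact hne rfl
  -- p annihilates M
  have hp_ann : ∀ x ∈ p, ∀ m : M, x • m = 0 := by
    intro x hx m
    apply hinj
    rw [← LocalizedModule.smul'_mk]
    rw [← algebraMap_smul A x (LocalizedModule.mk m 1 : N)]
    exact hmaxann _ ((IsLocalization.AtPrime.to_map_mem_maximal_iff A p x).mpr hx) _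
  have hpass : IsAssociatedPrime p M := by
    have : p ∈ associatedPrimes R M := by rw [hass]; rfl
    exact this
  have hann : Module.annihilator R M = p := by
    apply le_antisymm
    · obtain ⟨x, hx⟩ := hpass.2
      rw [hx]
      intro r hr
      apply Ideal.le_radical
      rw [Submodule.mem_colon_singleton, Submodule.mem_bot]
      exact Module.mem_annihilator.mp hr x
    · intro x hx
      exact Module.mem_annihilator.mpr (hp_ann x hx)
  refine ⟨hann, ?_⟩
  -- Part B : construct the embedding
  classical
  haveI : Nontrivial N := IsSimpleModule.nontrivial A N
  have hMnt : Nontrivial M := by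
    by_contra h
    rw [not_nontrivial_iff_subsingleton] at h
    have hsub : Subsingleton N := by
      constructor
      intro x y
      induction x using LocalizedModule.induction_on with
      | h m s =>
        induction y using LocalizedModule.induction_on with
        | h m' s' =>
          exact LocalizedModule.mk_eq.mpr ⟨1, by
            rw [Subsingleton.elim m 0, Subsingleton.elim m' 0]; simp⟩
    exact not_subsingleton_iff_nontrivial.mpr ‹Nontrivial N› hsub
  obtain ⟨m₀, hm₀⟩ := exists_ne (0 : M)
  have htor : Module.IsTorsionBySet R M (p : Set R) := fun m a => hp_ann a.1 a.2 m
  letI instDM : Module (R ⧸ p) M := htor.module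
  have hqsmul : ∀ (r : R) (m : M), (Ideal.Quotient.mk p r) • m = r • m :=
    fun r m => htor.mk_smul r m
  set K := FractionRing (R ⧸ p) with hK
  set L := LocalizedModule (nonZeroDivisors (R ⧸ p)) M with hL
  have hsm : ∀ (r : R) (x : R ⧸ p), (Ideal.Quotient.mk p r) • x = r • x := by
    intro r x
    obtain ⟨y, rfl⟩ := Ideal.Quotient.mk_surjective x
    rw [smul_eq_mul, ← map_mul]
    rfl
  -- injectivity of the localization map M → L
  have hinjD : ∀ m : M, (LocalizedModule.mk m 1 : L) = 0 → m = 0 := by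
    intro m hm
    rw [← LocalizedModule.zero_mk (1 : nonZeroDivisors (R ⧸ p))] at hm
    obtain ⟨u, hu⟩ := LocalizedModule.mk_eq.mp hm
    simp only [smul_zero, one_smul, Submonoid.smul_def] at hu
    obtain ⟨r, hr⟩ := Ideal.Quotient.mk_surjective (u : R ⧸ p)
    by_contra hmne
    have hrp : r ∈ p := hann_le m hmne r (by rw [← hqsmul r m, hr]; exact hu)
    have h0 : (u : R ⧸ p) = 0 := by rw [← hr]; exact Ideal.Quotient.eq_zero_iff_mem.mpr hrp
    exact nonZeroDivisors.ne_zero u.2 h0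
  set e : L := LocalizedModule.mk m₀ 1 with he_def
  have he : e ≠ 0 := fun h => hm₀ (hinjD m₀ h)
  have hNm₀ : (LocalizedModule.mk m₀ 1 : N) ≠ 0 := fun h => hm₀ (hinj m₀ h)
  have hNspan : Submodule.span A {(LocalizedModule.mk m₀ 1 : N)} = ⊤ := by
    rcases eq_bot_or_eq_top (Submodule.span A {(LocalizedModule.mk m₀ 1 : N)}) with h | h
    · exact absurd (Submodule.span_singleton_eq_bot.mp h) hNm₀
    · exact h
  have halg : ∀ (c : R ⧸ p) (x : L), c • x = algebraMap (R ⧸ p) K c • x :=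
    fun c x => (algebraMap_smul K c x).symm
  have hgen : ∀ m : M, (LocalizedModule.mk m 1 : L) ∈ Submodule.span K {e} := by
    intro m
    have h1 : (LocalizedModule.mk m 1 : N) ∈ Submodule.span A {LocalizedModule.mk m₀ 1} := by
      rw [hNspan]; trivial
    obtain ⟨a, ha⟩ := Submodule.mem_span_singleton.mp h1
    obtain ⟨⟨r, s⟩, rfl⟩ := IsLocalization.mk'_surjective p.primeCompl a
    dsimp only at ha
    rw [← Localization.mk_eq_mk'_apply, LocalizedModule.mk_smul_mk] at ha
    obtain ⟨u, hu⟩ := LocalizedModule.mk_eq.mp ha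
    simp only [one_smul, Submonoid.smul_def, Submonoid.coe_mul, mul_one] at hu
    -- hu : u • r • m₀ = u • s • m  (roughly)
    set c₁ : R ⧸ p := Ideal.Quotient.mk p ((u : R) * s) with hc₁def
    set c₂ : R ⧸ p := Ideal.Quotient.mk p ((u : R) * r) with hc₂def
    have hc : c₁ • m = c₂ • m₀ := by
      rw [hc₁def, hc₂def, hqsmul, hqsmul, mul_smul, mul_smul]
      exact hu.symm
    have hc1 : c₁ ≠ 0 := fun h =>
      p.primeCompl.mul_mem u.2 s.2 (Ideal.Quotient.eq_zero_iff_mem.mp h)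
    have hc1K : algebraMap (R ⧸ p) K c₁ ≠ 0 := fun h =>
      hc1 (IsFractionRing.injective (R ⧸ p) K (by rw [h, map_zero]))
    have hLc : c₁ • (LocalizedModule.mk m 1 : L) = c₂ • e := by
      rw [he_def, LocalizedModule.smul'_mk, LocalizedModule.smul'_mk, hc]
    rw [Submodule.mem_span_singleton]
    refine ⟨(algebraMap (R ⧸ p) K c₁)⁻¹ * algebraMap (R ⧸ p) K c₂, ?_⟩
    rw [mul_smul, ← halg c₂, ← hLc, halg c₁, inv_smul_smul₀ hc1K]
  have hspanL : ⊤ ≤ Submodule.span K {e} := by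
    intro z _
    induction z using LocalizedModule.induction_on with
    | h m s =>
      have h1 : ((s : R ⧸ p)) • (LocalizedModule.mk m s : L) = LocalizedModule.mk m 1 := by
        rw [LocalizedModule.smul'_mk]
        exact LocalizedModule.mk_cancel s m
      have hsK : algebraMap (R ⧸ p) K ((s : R ⧸ p)) ≠ 0 := fun h =>
        nonZeroDivisors.ne_zero s.2 (IsFractionRing.injective (R ⧸ p) K (by rw [h, map_zero]))
      have h2 : (LocalizedModule.mk m s : L)
          = (algebraMap (R ⧸ p) K ((s : R ⧸ p)))⁻¹ • ((s : R ⧸ p) • (LocalizedModule.mk m s : L)) := by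
        rw [halg, inv_smul_smul₀ hsK]
      rw [h2, h1]
      exact Submodule.smul_mem _ _ (hgen m)
  set bL : Module.Basis Unit K L :=
    Module.Basis.mk (v := fun _ : Unit => e) (linearIndependent_unique_iff.mpr he)
      (by rw [Set.range_const]; exact hspanL) with hbL
  set ψ : L ≃ₗ[K] K := bL.repr.trans (Finsupp.LinearEquiv.finsuppUnique K K Unit) with hψ
  set g : M →ₗ[R ⧸ p] K :=
    ((ψ.restrictScalars (R ⧸ p)).toLinearMap).comp
      (LocalizedModule.mkLinearMap (nonZeroDivisors (R ⧸ p)) M) with hg_def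
  have hg0 : ∀ m : M, g m = 0 → m = 0 := by
    intro m hm
    apply hinjD
    have : ψ (LocalizedModule.mk m 1) = ψ 0 := by
      rw [map_zero]; exact hm
    exact ψ.injective this
  -- generators
  obtain ⟨sgen, hsgen⟩ := Module.Finite.fg_top (R := R) (M := M)
  have hDspan : ∀ m : M, m ∈ Submodule.span (R ⧸ p) (sgen : Set M) := by
    intro m
    have hm : m ∈ Submodule.span R (sgen : Set M) := by rw [hsgen]; trivial
    refine Submodule.span_induction (fun x hx => Submodule.subset_span hx)
      (Submodule.zero_mem _) (fun x y _ _ hx hy => Submodule.add_mem _ hx hy)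
      (fun r x _ hx => ?_) hm
    rw [← hqsmul r x]
    exact Submodule.smul_mem _ _ hx
  obtain ⟨d, hd⟩ := IsLocalization.exist_integer_multiples_of_finset
    (nonZeroDivisors (R ⧸ p)) (S := K) (sgen.image (fun m => g m))
  set h : M →ₗ[R ⧸ p] K := (d : R ⧸ p) • g with hh_def
  have hdK : algebraMap (R ⧸ p) K ((d : R ⧸ p)) ≠ 0 := fun hzero =>
    nonZeroDivisors.ne_zero d.2 (IsFractionRing.injective (R ⧸ p) K (by rw [hzero, map_zero]))
  have hh0 : ∀ m : M, h m = 0 → m = 0 := by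
    intro m hm
    rw [hh_def, LinearMap.smul_apply, Algebra.smul_def] at hm
    rcases mul_eq_zero.mp hm with h1 | h1
    · exact absurd h1 hdK
    · exact hg0 m h1
  have hh_inj : Function.Injective h := by
    intro x y hxy
    have : h (x - y) = 0 := by rw [map_sub, hxy, sub_self]
    exact sub_eq_zero.mp (hh0 _ this)
  have hrange : ∀ m : M, h m ∈ LinearMap.range (Algebra.linearMap (R ⧸ p) K) := by
    intro m
    refine Submodule.span_induction (fun x hx => ?_) ?_ ?_ ?_ (hDspan m)
    · obtain ⟨y, hy⟩ := hd (g x) (Finset.mem_image_of_mem _ hx)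
      exact ⟨y, by rw [Algebra.linearMap_apply, hy, hh_def, LinearMap.smul_apply]⟩
    · rw [map_zero]; exact Submodule.zero_mem _
    · intro x y _ _ hx hy; rw [map_add]; exact Submodule.add_mem _ hx hy
    · intro c x _ hx; rw [map_smul]; exact Submodule.smul_mem _ _ hx
  set eA := LinearEquiv.ofInjective (Algebra.linearMap (R ⧸ p) K)
    (IsFractionRing.injective (R ⧸ p) K) with heA
  set φD : M →ₗ[R ⧸ p] R ⧸ p :=
    eA.symm.toLinearMap.comp (h.codRestrict _ hrange) with hφD
  have hφD_inj : Function.Injective φD := by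
    intro x y hxy
    apply hh_inj
    have := eA.symm.injective (by exact hxy)
    exact congrArg Subtype.val this
  refine ⟨{ toFun := φD, map_add' := φD.map_add, map_smul' := ?_ }, hφD_inj, ?_⟩
  · intro r m
    simp only [RingHom.id_apply]
    rw [← hqsmul r m, φD.map_smul, hsm]
  · intro hbot
    have h1 : φD m₀ = 0 := by
      have := LinearMap.mem_range_self
        (⟨⟨φD, φD.map_add⟩, by
          intro r m
          simp only [RingHom.id_apply, AddHom.coe_mk]
          rw [← hqsmul r m, φD.map_smul, hsm]⟩ : M →ₗ[R] R ⧸ p) m₀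
      rw [hbot] at this
      simpa using this
    exact hm₀ (hφD_inj (by rw [h1, map_zero]))
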